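/- Let X be a compact metric space, c : X × X → ℝ a continuous cost function, and μ, ν Borel probability measures on X. Then there exists a coupling π₀ of μ and ν that minimizes the total transportation cost: ∫ c dπ₀ ≤ ∫ c dπ for every coupling π of μ and ν. -/

import Mathlib

open MeasureTheory Filter Topology
open scoped ENNReal NNReal

namespace KantorovichAux

/-- A normalized positive linear functional on continuous functions. -/
structure PosFunctional (Y : Type*) [TopologicalSpace Y] where
  L : C(Y, ℝ) → ℝ
  hadd : ∀ f g, L (f + g) = L f + L g
  hsmul : ∀ (r : ℝ) f, L (r • f) = r * L f
  hmono : ∀ f g : C(Y, ℝ), (∀ x, f x ≤ g x) → L f ≤ L g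
  hone : L 1 = 1

set_option linter.unusedSectionVars false


/-- Summing staircase "clamp" functions reconstructs `min t (N*ε)`. -/
lemma sum_clamp (ε t : ℝ) (hε : 0 < ε) (ht : 0 ≤ t) (N : ℕ) :
    ∑ i ∈ Finset.range N, ε * min 1 (max 0 ((t - i * ε) / ε)) = min t (N * ε) := by
  induction N with
  | zero => simp [ht]
  | succ n ih =>
    rw [Finset.sum_range_succ, ih]
    push_cast
    rcases le_total t (n * ε) with h | h
    · have h1 : (t - n * ε) / ε ≤ 0 :=
        div_nonpos_of_nonpos_of_nonneg (by linarith) (le_of_lt hε)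
      have h2 : max 0 ((t - n * ε) / ε) = 0 := max_eq_left h1
      rw [h2, min_eq_left h, min_eq_left (by nlinarith : t ≤ (n + 1) * ε)]
      norm_num
    · have h1 : 0 ≤ (t - n * ε) / ε := div_nonneg (by linarith) (le_of_lt hε)
      have h2 : max 0 ((t - n * ε) / ε) = (t - n * ε) / ε := max_eq_right h1
      rw [h2, min_eq_right h]
      rcases le_total t ((n + 1) * ε) with h3 | h3
      · have h4 : (t - n * ε) / ε ≤ 1 := by
          rw [div_le_one hε]; nlinarith
        rw [min_eq_right h4, min_eq_left h3]
        field_simp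
        ring
      · have h4 : (1:ℝ) ≤ (t - n * ε) / ε := by
          rw [le_div_iff₀ hε]; nlinarith
        rw [min_eq_left h4, min_eq_right h3]
        ring


variable {Y : Type*} [MetricSpace Y] [CompactSpace Y]

namespace PosFunctional

variable (Λ : PosFunctional Y)

lemma hzero : Λ.L 0 = 0 := by
  have := Λ.hsmul 0 0
  simpa using this

lemma hnonneg (f : C(Y, ℝ)) (hf : ∀ x, 0 ≤ f x) : 0 ≤ Λ.L f := by
  have := Λ.hmono 0 f (by simpa using hf)
  simpa [Λ.hzero] using this

/-- Test functions for a set `K`: nonnegative continuous functions that are `≥ 1` on `K`. -/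
def test (K : Set Y) : Set C(Y, ℝ) :=
  {f | (∀ x, 0 ≤ f x) ∧ ∀ x ∈ K, 1 ≤ f x}

lemma one_mem_test (K : Set Y) : (1 : C(Y, ℝ)) ∈ test K := by
  constructor <;> intros <;> simp

lemma bddBelow_image_test (K : Set Y) : BddBelow (Λ.L '' test K) := by
  refine ⟨0, ?_⟩
  rintro x ⟨f, hf, rfl⟩
  exact Λ.hnonneg f hf.1

/-- The "Riesz content" of a set. -/
noncomputable def lam (K : Set Y) : ℝ := sInf (Λ.L '' test K)

lemma lam_le {K : Set Y} {f : C(Y, ℝ)} (hf : f ∈ test K) : Λ.lam K ≤ Λ.L f :=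
  csInf_le (Λ.bddBelow_image_test K) ⟨f, hf, rfl⟩

lemma lam_nonneg (K : Set Y) : 0 ≤ Λ.lam K := by
  apply le_csInf (⟨Λ.L 1, ⟨1, one_mem_test K, rfl⟩⟩ : (Λ.L '' test K).Nonempty)
  rintro x ⟨f, hf, rfl⟩
  exact Λ.hnonneg f hf.1

lemma lam_le_one (K : Set Y) : Λ.lam K ≤ 1 := by
  have := Λ.lam_le (K := K) (one_mem_test K)
  simpa [Λ.hone] using this

lemma lam_mono {K₁ K₂ : Set Y} (h : K₁ ⊆ K₂) : Λ.lam K₁ ≤ Λ.lam K₂ := by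
  apply csInf_le_csInf (Λ.bddBelow_image_test K₁) (⟨Λ.L 1, ⟨1, one_mem_test K₂, rfl⟩⟩ : (Λ.L '' test K₂).Nonempty)
  apply Set.image_mono
  rintro f ⟨hf0, hf1⟩
  exact ⟨hf0, fun x hx => hf1 x (h hx)⟩

lemma exists_test_lt {K : Set Y} {ε : ℝ} (hε : 0 < ε) :
    ∃ f ∈ test K, Λ.L f < Λ.lam K + ε := by
  obtain ⟨x, ⟨f, hf, rfl⟩, hx⟩ :=
    exists_lt_of_csInf_lt (⟨Λ.L 1, 1, one_mem_test K, rfl⟩ : (Λ.L '' test K).Nonempty)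
      (lt_add_of_pos_right (Λ.lam K) hε)
  exact ⟨f, hf, hx⟩

lemma lam_union_le (K₁ K₂ : Set Y) : Λ.lam (K₁ ∪ K₂) ≤ Λ.lam K₁ + Λ.lam K₂ := by
  apply le_of_forall_pos_le_add
  intro ε hε
  obtain ⟨f₁, hf₁, hLf₁⟩ := Λ.exists_test_lt (K := K₁) (half_pos hε)
  obtain ⟨f₂, hf₂, hLf₂⟩ := Λ.exists_test_lt (K := K₂) (half_pos hε)
  have hmem : f₁ + f₂ ∈ test (K₁ ∪ K₂) := by
    constructor
    · intro x
      have := hf₁.1 x; have := hf₂.1 x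
      simp only [ContinuousMap.add_apply]; linarith
    · rintro x (hx | hx)
      · have := hf₁.2 x hx; have := hf₂.1 x
        simp only [ContinuousMap.add_apply]; linarith
      · have := hf₂.2 x hx; have := hf₁.1 x
        simp only [ContinuousMap.add_apply]; linarith
  calc Λ.lam (K₁ ∪ K₂) ≤ Λ.L (f₁ + f₂) := Λ.lam_le hmem
    _ = Λ.L f₁ + Λ.L f₂ := Λ.hadd _ _
    _ ≤ Λ.lam K₁ + Λ.lam K₂ + ε := by linarith

lemma lam_union_eq {K₁ K₂ : Set Y} (h : Disjoint K₁ K₂) (h₁ : IsClosed K₁) (h₂ : IsClosed K₂) :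
    Λ.lam (K₁ ∪ K₂) = Λ.lam K₁ + Λ.lam K₂ := by
  refine le_antisymm (Λ.lam_union_le _ _) ?_
  apply le_of_forall_pos_le_add
  intro ε hε
  obtain ⟨f, hf, hLf⟩ := Λ.exists_test_lt (K := K₁ ∪ K₂) hε
  obtain ⟨h', hh0, hh1, hh01⟩ := exists_continuous_zero_one_of_isClosed h₂ h₁ h.symm
  -- h' is 0 on K₂ and 1 on K₁, valued in [0,1]
  have hg₁ : f * h' ∈ test K₁ := by
    constructor
    · intro x
      exact mul_nonneg (hf.1 x) (hh01 x).1
    · intro x hx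
      have := hf.2 x (Or.inl hx)
      have h1 : h' x = 1 := hh1 hx
      simp only [ContinuousMap.mul_apply, h1, mul_one]
      exact this
  have hg₂ : f * (1 - h') ∈ test K₂ := by
    constructor
    · intro x
      have := (hh01 x).2
      apply mul_nonneg (hf.1 x)
      simp only [ContinuousMap.sub_apply, ContinuousMap.one_apply]
      linarith
    · intro x hx
      have := hf.2 x (Or.inr hx)
      have h0 : h' x = 0 := hh0 hx
      simp only [ContinuousMap.mul_apply, ContinuousMap.sub_apply, ContinuousMap.one_apply, h0]
      linarith
  have hsum : f * h' + f * (1 - h') = f := by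
    ext x; simp; ring
  calc Λ.lam K₁ + Λ.lam K₂ ≤ Λ.L (f * h') + Λ.L (f * (1 - h')) :=
        add_le_add (Λ.lam_le hg₁) (Λ.lam_le hg₂)
    _ = Λ.L f := by rw [← Λ.hadd, hsum]
    _ ≤ Λ.lam (K₁ ∪ K₂) + ε := le_of_lt hLf

lemma lam_univ : Λ.lam (Set.univ : Set Y) = 1 := by
  refine le_antisymm (Λ.lam_le_one _) ?_
  apply le_csInf (⟨Λ.L 1, ⟨1, one_mem_test _, rfl⟩⟩ : (Λ.L '' test Set.univ).Nonempty)
  rintro x ⟨f, hf, rfl⟩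
  have := Λ.hmono 1 f (fun x => by simpa using hf.2 x trivial)
  simpa [Λ.hone] using this

/-- The content associated to a positive functional. -/
noncomputable def content : Content Y where
  toFun K := Real.toNNReal (Λ.lam K.1)
  mono' K₁ K₂ h := Real.toNNReal_mono (Λ.lam_mono h)
  sup_disjoint' K₁ K₂ h h₁ h₂ := by
    simpa [Real.toNNReal_add (Λ.lam_nonneg _) (Λ.lam_nonneg _)] using
      congrArg Real.toNNReal (Λ.lam_union_eq h h₁ h₂)
  sup_le' K₁ K₂ := by
    rw [← Real.toNNReal_add (Λ.lam_nonneg _) (Λ.lam_nonneg _)]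
    exact Real.toNNReal_mono (Λ.lam_union_le _ _)

lemma contentRegular : Λ.content.ContentRegular := by
  intro K
  refine le_antisymm (le_iInf₂ fun K' hK' => ?_) ?_
  · exact ENNReal.coe_le_coe.mpr
      (Real.toNNReal_mono (Λ.lam_mono (hK'.trans interior_subset)))
  · apply ENNReal.le_of_forall_pos_le_add
    intro ε hε _
    have hεr : (0:ℝ) < (ε:ℝ) := hε
    have hε' : (0 : ℝ) < (ε:ℝ) / 4 := by positivity
    obtain ⟨f, hf, hLf⟩ := Λ.exists_test_lt (K := (K : Set Y)) hε'
    set δ : ℝ := min ((ε:ℝ) / 4) (1/2) with hδdef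
    have hδpos : 0 < δ := by positivity
    have hδle : δ ≤ 1/2 := min_le_right _ _
    have hδε : δ ≤ (ε:ℝ) / 4 := min_le_left _ _
    have h1δ : (0:ℝ) < 1 - δ := by linarith
    set K' : Set Y := {x | 1 - δ ≤ f x} with hK'def
    have hK'closed : IsClosed K' := isClosed_le continuous_const f.continuous
    have hK'compact : IsCompact K' := hK'closed.isCompact
    have hKint : (K : Set Y) ⊆ interior K' := by
      intro x hx
      apply mem_interior.mpr
      refine ⟨{y | 1 - δ < f y}, ?_, isOpen_lt continuous_const f.continuous, ?_⟩
      · intro y hy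
        have hy' : 1 - δ < f y := hy
        show 1 - δ ≤ f y
        linarith
      · have := hf.2 x hx
        show 1 - δ < f x
        linarith
    have hscale : (1 - δ)⁻¹ • f ∈ test K' := by
      constructor
      · intro x
        simp only [ContinuousMap.smul_apply, smul_eq_mul]
        exact mul_nonneg (by positivity) (hf.1 x)
      · intro x hx
        have hx' : 1 - δ ≤ f x := hx
        simp only [ContinuousMap.smul_apply, smul_eq_mul]
        calc (1:ℝ) = (1-δ)⁻¹ * (1-δ) := (inv_mul_cancel₀ (ne_of_gt h1δ)).symm
          _ ≤ (1-δ)⁻¹ * f x := by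
              apply mul_le_mul_of_nonneg_left hx' (by positivity)
    have key : Λ.lam K' ≤ Λ.lam K + (ε:ℝ) := by
      have h1 : Λ.lam K' ≤ (1 - δ)⁻¹ * Λ.L f := by
        have := Λ.lam_le hscale
        rwa [Λ.hsmul] at this
      have hLfnn : 0 ≤ Λ.L f := Λ.hnonneg f hf.1
      have hLfle : Λ.L f ≤ Λ.lam K + (ε:ℝ) / 4 := le_of_lt hLf
      have hlamle : Λ.lam (K : Set Y) ≤ 1 := Λ.lam_le_one _
      have hlamnn : 0 ≤ Λ.lam (K : Set Y) := Λ.lam_nonneg _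
      rcases le_total (ε:ℝ) 1 with hεle | hεge
      · have h2 : (1 - δ)⁻¹ * Λ.L f ≤ Λ.L f + 2 * δ * Λ.L f := by
          have hinv : (1 - δ)⁻¹ ≤ 1 + 2 * δ := by
            rw [inv_le_iff_one_le_mul₀ h1δ]
            nlinarith
          nlinarith
        have hLfle2 : Λ.L f ≤ 1 + (ε:ℝ) / 4 := by linarith
        have hδsmall : 2 * δ * Λ.L f ≤ 2 * ((ε:ℝ)/4) * (1 + (ε:ℝ)/4) := by
          apply mul_le_mul (by nlinarith) hLfle2 hLfnn (by positivity)
        have : 2 * ((ε:ℝ)/4) * (1 + (ε:ℝ)/4) ≤ 5/8 * (ε:ℝ) := by nlinarith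
        linarith
      · have := Λ.lam_le_one K'
        linarith
    refine le_trans (iInf₂_le (⟨K', hK'compact⟩ : TopologicalSpace.Compacts Y) hKint) ?_
    show ((Λ.lam K').toNNReal : ℝ≥0∞) ≤ ((Λ.lam (K : Set Y)).toNNReal : ℝ≥0∞) + (ε : ℝ≥0∞)
    rw [← ENNReal.coe_add]
    apply ENNReal.coe_le_coe.mpr
    have : (Λ.lam (K : Set Y) + (ε:ℝ)).toNNReal = (Λ.lam (K : Set Y)).toNNReal + ε := by
      rw [Real.toNNReal_add (Λ.lam_nonneg _) (le_of_lt hεr), Real.toNNReal_coe]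
    rw [← this]
    exact Real.toNNReal_mono key

variable [MeasurableSpace Y] [BorelSpace Y]

/-- The measure associated to a positive functional. -/
noncomputable def toMeasure : Measure Y := Λ.content.measure

lemma toMeasure_compact {K : Set Y} (hK : IsCompact K) :
    Λ.toMeasure K = ENNReal.ofReal (Λ.lam K) := by
  have := Λ.content.measure_eq_content_of_regular Λ.contentRegular ⟨K, hK⟩
  simpa [toMeasure, content, ENNReal.ofReal] using this

instance : IsProbabilityMeasure Λ.toMeasure := by
  constructor
  rw [Λ.toMeasure_compact isCompact_univ, Λ.lam_univ]
  simp

lemma L_finset_sum {ι : Type*} (s : Finset ι) (h : ι → C(Y, ℝ)) :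
    Λ.L (∑ i ∈ s, h i) = ∑ i ∈ s, Λ.L (h i) := by
  classical
  induction s using Finset.induction with
  | empty => simp [Λ.hzero]
  | insert _ _ hx ih => rw [Finset.sum_insert hx, Finset.sum_insert hx, Λ.hadd, ih]

lemma cm_integrable (f : C(Y, ℝ)) : Integrable (fun x => f x) Λ.toMeasure := by
  have := (BoundedContinuousFunction.mkOfCompact f).integrable Λ.toMeasure
  exact this

lemma integral_le (f : C(Y, ℝ)) (hf : ∀ x, 0 ≤ f x) :
    ∫ x, f x ∂Λ.toMeasure ≤ Λ.L f := by
  set π := Λ.toMeasure with hπdef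
  apply le_of_forall_pos_le_add
  intro ε hε
  set fb := BoundedContinuousFunction.mkOfCompact f with hfb
  set M : ℝ := ‖fb‖ with hM
  have hfM : ∀ x, f x ≤ M := by
    intro x
    have := fb.norm_coe_le_norm x
    have h2 : |f x| ≤ M := by simpa [hM, hfb, Real.norm_eq_abs] using this
    exact le_trans (le_abs_self _) h2
  set N : ℕ := ⌈M / ε⌉₊ + 1 with hN
  have hNε : M ≤ N * ε := by
    have h1 : M / ε ≤ ⌈M / ε⌉₊ := Nat.le_ceil _
    have h2 : (⌈M / ε⌉₊ : ℝ) ≤ N := by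
      rw [hN]; push_cast; linarith
    calc M = (M / ε) * ε := by field_simp
      _ ≤ (N : ℝ) * ε := by
          apply mul_le_mul_of_nonneg_right (h1.trans h2) (le_of_lt hε)
  have gcont : ∀ i : ℕ, Continuous fun x => min 1 (max 0 ((f x - i * ε) / ε)) := by
    intro i; fun_prop
  set g : ℕ → C(Y, ℝ) := fun i => ⟨_, gcont i⟩ with hg
  have hg_apply : ∀ i x, g i x = min 1 (max 0 ((f x - i * ε) / ε)) := fun _ _ => rfl
  have hg0 : ∀ i x, 0 ≤ g i x := fun i x =>
    le_min (by norm_num) (le_max_left 0 _)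
  have hg1 : ∀ i x, g i x ≤ 1 := fun i x => min_le_left _ _
  set D : ℕ → Set Y := fun i => {x | ((i:ℝ) + 1) * ε ≤ f x} with hD
  have hDclosed : ∀ i, IsClosed (D i) := fun i =>
    isClosed_le continuous_const f.continuous
  have hDmeas : ∀ i, MeasurableSet (D i) := fun i => (hDclosed i).measurableSet
  have htest : ∀ i, g i ∈ test (D i) := by
    intro i
    refine ⟨hg0 i, fun x hx => ?_⟩
    have hx' : ((i:ℝ) + 1) * ε ≤ f x := hx
    rw [hg_apply]
    refine le_min le_rfl (le_max_of_le_right ?_)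
    rw [le_div_iff₀ hε]
    nlinarith
  have hπD : ∀ i, (π (D i)).toReal ≤ Λ.L (g i) := by
    intro i
    rw [show π (D i) = ENNReal.ofReal (Λ.lam (D i)) from
      Λ.toMeasure_compact (hDclosed i).isCompact]
    rw [ENNReal.toReal_ofReal (Λ.lam_nonneg _)]
    exact Λ.lam_le (htest i)
  have hgind : ∀ i x, g (i + 1) x ≤ (D i).indicator (fun _ => (1:ℝ)) x := by
    intro i x
    by_cases hx : x ∈ D i
    · rw [Set.indicator_of_mem hx]; exact hg1 _ x
    · rw [Set.indicator_of_notMem hx]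
      have hfx : f x < ((i:ℝ) + 1) * ε := not_le.mp hx
      rw [hg_apply]
      have h1 : (f x - ((i:ℕ) + 1 : ℕ) * ε) / ε ≤ 0 := by
        apply div_nonpos_of_nonpos_of_nonneg _ (le_of_lt hε)
        push_cast
        linarith
      have h2 : max 0 ((f x - ((i:ℕ) + 1 : ℕ) * ε) / ε) = 0 := max_eq_left h1
      rw [h2]
      norm_num
  have hIg : ∀ i, ∫ x, g (i + 1) x ∂π ≤ (π (D i)).toReal := by
    intro i
    have hind : ∫ x, (D i).indicator (fun _ => (1:ℝ)) x ∂π = (π (D i)).toReal := by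
      rw [MeasureTheory.integral_indicator_const (1:ℝ) (hDmeas i)]
      simp [measureReal_def]
    rw [← hind]
    exact integral_mono (Λ.cm_integrable _)
      ((integrable_const (1:ℝ)).indicator (hDmeas i)) (hgind i)
  have hsum : ∀ (m : ℕ) (x : Y), ∑ i ∈ Finset.range m, ε * g i x = min (f x) (m * ε) :=
    fun m x => sum_clamp ε (f x) hε (hf x) m
  have hfsum : ∀ x, f x = ∑ i ∈ Finset.range N, ε * g i x := by
    intro x
    rw [hsum]
    exact (min_eq_left ((hfM x).trans hNε)).symm
  have hsumle : ∀ (m : ℕ) (x : Y), ∑ i ∈ Finset.range m, ε * g i x ≤ f x := by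
    intro m x
    rw [hsum]; exact min_le_left _ _
  have key : ∫ x, f x ∂π = ∑ i ∈ Finset.range N, ε * ∫ x, g i x ∂π := by
    calc ∫ x, f x ∂π = ∫ x, ∑ i ∈ Finset.range N, ε * g i x ∂π :=
          integral_congr_ae (Filter.Eventually.of_forall fun x => hfsum x)
      _ = ∑ i ∈ Finset.range N, ∫ x, ε * g i x ∂π := by
          apply integral_finset_sum
          intro i _
          exact (Λ.cm_integrable (g i)).const_mul ε
      _ = ∑ i ∈ Finset.range N, ε * ∫ x, g i x ∂π := by
          simp_rw [MeasureTheory.integral_const_mul]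
  have hg0int : ∫ x, g 0 x ∂π ≤ 1 := by
    have h1 : ∫ x, (1:ℝ) ∂π = 1 := by simp
    rw [← h1]
    exact integral_mono (Λ.cm_integrable _) (integrable_const _) (hg1 0)
  have hsplit : ∑ i ∈ Finset.range N, ε * ∫ x, g i x ∂π =
      (∑ i ∈ Finset.range (⌈M / ε⌉₊), ε * ∫ x, g (i + 1) x ∂π) + ε * ∫ x, g 0 x ∂π := by
    rw [hN, Finset.sum_range_succ']
  have hmain : ∑ i ∈ Finset.range (⌈M / ε⌉₊), ε * ∫ x, g (i + 1) x ∂π ≤ Λ.L f := by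
    calc ∑ i ∈ Finset.range (⌈M / ε⌉₊), ε * ∫ x, g (i + 1) x ∂π
        ≤ ∑ i ∈ Finset.range (⌈M / ε⌉₊), ε * Λ.L (g i) := by
          apply Finset.sum_le_sum
          intro i _
          exact mul_le_mul_of_nonneg_left ((hIg i).trans (hπD i)) (le_of_lt hε)
      _ = Λ.L (∑ i ∈ Finset.range (⌈M / ε⌉₊), ε • g i) := by
          rw [Λ.L_finset_sum]
          congr 1
          ext i
          rw [Λ.hsmul]
      _ ≤ Λ.L f := by
          apply Λ.hmono
          intro x
          have h1 : (∑ i ∈ Finset.range (⌈M / ε⌉₊), ε • g i) x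
              = ∑ i ∈ Finset.range (⌈M / ε⌉₊), ε * g i x := by
            rw [ContinuousMap.coe_sum, Finset.sum_apply]
            simp [ContinuousMap.smul_apply]
          rw [h1]
          exact hsumle _ x
  have hlast : ε * ∫ x, g 0 x ∂π ≤ ε :=
    (mul_le_of_le_one_right (le_of_lt hε) hg0int)
  rw [key, hsplit]
  linarith

lemma integral_eq (f : C(Y, ℝ)) : ∫ x, f x ∂Λ.toMeasure = Λ.L f := by
  set π := Λ.toMeasure with hπdef
  set B : ℝ := ‖BoundedContinuousFunction.mkOfCompact f‖ with hB
  have hfB : ∀ x, |f x| ≤ B := by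
    intro x
    have := (BoundedContinuousFunction.mkOfCompact f).norm_coe_le_norm x
    simpa [hB, Real.norm_eq_abs] using this
  have hint : Integrable (fun x => f x) π := Λ.cm_integrable f
  have hLB : Λ.L (B • (1 : C(Y, ℝ))) = B := by
    rw [Λ.hsmul, Λ.hone, mul_one]
  have h1 : ∫ x, f x ∂π ≤ Λ.L f := by
    have hpos : ∀ x, 0 ≤ (f + B • (1 : C(Y, ℝ))) x := by
      intro x
      have := (abs_le.mp (hfB x)).1
      simp only [ContinuousMap.add_apply, ContinuousMap.smul_apply, ContinuousMap.one_apply,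
        smul_eq_mul, mul_one]
      linarith
    have := Λ.integral_le (f + B • (1 : C(Y, ℝ))) hpos
    rw [Λ.hadd, hLB] at this
    have hint2 : ∫ x, (f + B • (1 : C(Y, ℝ))) x ∂π = (∫ x, f x ∂π) + B := by
      simp only [ContinuousMap.add_apply, ContinuousMap.smul_apply, ContinuousMap.one_apply,
        smul_eq_mul, mul_one]
      rw [integral_add hint (integrable_const B)]
      simp
    rw [hint2] at this
    linarith
  have h2 : Λ.L f ≤ ∫ x, f x ∂π := by
    have hpos : ∀ x, 0 ≤ (B • (1 : C(Y, ℝ)) - f) x := by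
      intro x
      have := (abs_le.mp (hfB x)).2
      simp only [ContinuousMap.sub_apply, ContinuousMap.smul_apply, ContinuousMap.one_apply,
        smul_eq_mul, mul_one]
      linarith
    have hLsub : Λ.L (B • (1 : C(Y, ℝ)) - f) = B - Λ.L f := by
      have : (B • (1 : C(Y, ℝ)) - f) + f = B • (1 : C(Y, ℝ)) := by ext x; simp
      have h3 := Λ.hadd (B • (1 : C(Y, ℝ)) - f) f
      rw [this, hLB] at h3
      linarith
    have := Λ.integral_le (B • (1 : C(Y, ℝ)) - f) hpos
    rw [hLsub] at this
    have hint2 : ∫ x, (B • (1 : C(Y, ℝ)) - f) x ∂π = B - ∫ x, f x ∂π := by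
      simp only [ContinuousMap.sub_apply, ContinuousMap.smul_apply, ContinuousMap.one_apply,
        smul_eq_mul, mul_one]
      rw [integral_sub (integrable_const B) hint]
      simp
    rw [hint2] at this
    linarith
  linarith

end PosFunctional

end KantorovichAux

open KantorovichAux

/-- On a compact metric space with a continuous cost function, there exists a coupling of
two Borel probability measures minimizing the total transportation cost among all
couplings (Kantorovich's existence theorem). -/
theorem exists_optimal_coupling {X : Type*} [MetricSpace X] [CompactSpace X]
    [MeasurableSpace X] [BorelSpace X]
    (μ ν : Measure X) [IsProbabilityMeasure μ] [IsProbabilityMeasure ν]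
    (c : X × X → ℝ) (hc : Continuous c) :
    ∃ π₀ : Measure (X × X), (π₀.map Prod.fst = μ ∧ π₀.map Prod.snd = ν) ∧
      ∀ π : Measure (X × X), π.map Prod.fst = μ → π.map Prod.snd = ν →
        ∫ z, c z ∂π₀ ≤ ∫ z, c z ∂π := by
  classical
  -- the set of couplings
  set S : Set (Measure (X × X)) := {π | π.map Prod.fst = μ ∧ π.map Prod.snd = ν} with hS
  have hprod_mem : μ.prod ν ∈ S := by
    constructor
    · rw [Measure.map_fst_prod]; simp
    · rw [Measure.map_snd_prod]; simp
  have hprob : ∀ π ∈ S, IsProbabilityMeasure π := by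
    rintro π ⟨h1, -⟩
    constructor
    have := congrArg (fun m : Measure X => m Set.univ) h1
    simpa [Measure.map_apply measurable_fst MeasurableSet.univ] using this
  set c' : C(X × X, ℝ) := ⟨c, hc⟩ with hc'
  have hcint : ∀ (f : C(X × X, ℝ)) (π : Measure (X × X)) (_ : IsProbabilityMeasure π),
      Integrable (fun z => f z) π := by
    intro f π hπ
    exact (BoundedContinuousFunction.mkOfCompact f).integrable π
  have hcost_bdd : ∀ (f : C(X × X, ℝ)) (π : Measure (X × X)) (_ : IsProbabilityMeasure π),
      |∫ z, f z ∂π| ≤ ‖BoundedContinuousFunction.mkOfCompact f‖ := by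
    intro f π hπ
    have := BoundedContinuousFunction.norm_integral_le_norm
      (μ := π) (BoundedContinuousFunction.mkOfCompact f)
    simpa [Real.norm_eq_abs] using this
  set T : Set ℝ := (fun π => ∫ z, c z ∂π) '' S with hT
  have hTne : T.Nonempty := ⟨_, μ.prod ν, hprod_mem, rfl⟩
  have hTbdd : BddBelow T := by
    refine ⟨-‖BoundedContinuousFunction.mkOfCompact c'‖, ?_⟩
    rintro x ⟨π, hπ, rfl⟩
    exact (abs_le.mp (hcost_bdd c' π (hprob π hπ))).1
  set I : ℝ := sInf T with hI
  obtain ⟨u, -, huI, huT⟩ := exists_seq_tendsto_sInf hTne hTbdd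
  have huT' : ∀ n, ∃ π, π ∈ S ∧ ∫ z, c z ∂π = u n := fun n => huT n
  choose p hpS hpcost using huT'
  have hpprob : ∀ n, IsProbabilityMeasure (p n) := fun n => hprob _ (hpS n)
  -- ultrafilter limits
  set U : Ultrafilter ℕ := Ultrafilter.of Filter.atTop with hU'
  have hU : (U : Filter ℕ) ≤ Filter.atTop := Ultrafilter.of_le _
  have hlim : ∀ f : C(X × X, ℝ), ∃ l : ℝ,
      Filter.Tendsto (fun n => ∫ z, f z ∂(p n)) U (𝓝 l) := by
    intro f
    set fb := BoundedContinuousFunction.mkOfCompact f with hfb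
    have hmem : ∀ n, (∫ z, f z ∂(p n)) ∈ Set.Icc (-‖fb‖) ‖fb‖ := by
      intro n
      exact abs_le.mp (hcost_bdd f (p n) (hpprob n))
    have hle : (U.map (fun n => ∫ z, f z ∂(p n)) : Filter ℝ)
        ≤ Filter.principal (Set.Icc (-‖fb‖) ‖fb‖) := by
      rw [Filter.le_principal_iff]
      exact Filter.mem_map.mpr (Filter.Eventually.of_forall hmem)
    obtain ⟨l, -, hl⟩ := isCompact_Icc.ultrafilter_le_nhds (U.map _) hle
    exact ⟨l, hl⟩
  choose L hL using hlim
  have hadd : ∀ f g, L (f + g) = L f + L g := by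
    intro f g
    refine tendsto_nhds_unique (hL (f + g)) ?_
    have h1 := (hL f).add (hL g)
    convert h1 using 1
    funext n
    simp only [ContinuousMap.add_apply]
    exact integral_add (hcint f _ (hpprob n)) (hcint g _ (hpprob n))
  have hsmul : ∀ (r : ℝ) f, L (r • f) = r * L f := by
    intro r f
    refine tendsto_nhds_unique (hL (r • f)) ?_
    have h1 := (hL f).const_mul r
    convert h1 using 1
    funext n
    simp only [ContinuousMap.smul_apply, smul_eq_mul]
    exact MeasureTheory.integral_const_mul r _
  have hmono : ∀ f g : C(X × X, ℝ), (∀ x, f x ≤ g x) → L f ≤ L g := by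
    intro f g hfg
    refine le_of_tendsto_of_tendsto' (hL f) (hL g) fun n => ?_
    exact integral_mono (hcint f _ (hpprob n)) (hcint g _ (hpprob n)) hfg
  have hone : L 1 = 1 := by
    refine tendsto_nhds_unique (hL 1) ?_
    have : (fun n => ∫ z, (1 : C(X × X, ℝ)) z ∂(p n)) = fun _ => (1 : ℝ) := by
      funext n
      haveI := hpprob n
      simp
    rw [this]
    exact tendsto_const_nhds
  set Λ : PosFunctional (X × X) := ⟨L, hadd, hsmul, hmono, hone⟩ with hΛ
  set π₀ : Measure (X × X) := Λ.toMeasure with hπ₀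
  haveI : IsProbabilityMeasure π₀ := by rw [hπ₀]; infer_instance
  have hint : ∀ f : C(X × X, ℝ), ∫ z, f z ∂π₀ = L f := fun f => Λ.integral_eq f
  -- cost of the limit
  have hcostL : L c' = I := by
    refine tendsto_nhds_unique (hL c') ?_
    have h1 : Filter.Tendsto u U (𝓝 I) := huI.mono_left hU
    convert h1 using 1
    funext n
    exact hpcost n
  -- marginals
  have hmar : ∀ (φ : X × X → X) (hφ : Measurable φ) (hφc : Continuous φ)
      (m : Measure X) (hm : IsProbabilityMeasure m)
      (hmn : ∀ n, (p n).map φ = m), π₀.map φ = m := by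
    intro φ hφ hφc m hm hmn
    haveI : IsProbabilityMeasure (π₀.map φ) :=
      Measure.isProbabilityMeasure_map hφ.aemeasurable
    apply ext_of_forall_lintegral_eq_of_IsFiniteMeasure
    intro f
    have h1 : ∫⁻ x, f x ∂(π₀.map φ) ≠ ⊤ :=
      (BoundedContinuousFunction.lintegral_lt_top_of_nnreal _ f).ne
    have h2 : ∫⁻ x, f x ∂m ≠ ⊤ :=
      (BoundedContinuousFunction.lintegral_lt_top_of_nnreal _ f).ne
    rw [← ENNReal.toReal_eq_toReal_iff' h1 h2,
      BoundedContinuousFunction.toReal_lintegral_coe_eq_integral,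
      BoundedContinuousFunction.toReal_lintegral_coe_eq_integral]
    have hfc : Continuous fun x : X => (f x : ℝ) := NNReal.continuous_coe.comp f.continuous
    set F : C(X × X, ℝ) := ⟨fun z => (f (φ z) : ℝ), hfc.comp hφc⟩ with hF
    have hmeas : ∫ x, (f x : ℝ) ∂(π₀.map φ) = ∫ z, F z ∂π₀ :=
      integral_map hφ.aemeasurable hfc.aestronglyMeasurable
    rw [hmeas, hint F]
    refine tendsto_nhds_unique (hL F) ?_
    have : (fun n => ∫ z, F z ∂(p n)) = fun _ => ∫ x, (f x : ℝ) ∂m := by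
      funext n
      rw [← hmn n]
      exact (integral_map hφ.aemeasurable hfc.aestronglyMeasurable).symm
    rw [this]
    exact tendsto_const_nhds
  have hfst : π₀.map Prod.fst = μ :=
    hmar Prod.fst measurable_fst continuous_fst μ inferInstance (fun n => (hpS n).1)
  have hsnd : π₀.map Prod.snd = ν :=
    hmar Prod.snd measurable_snd continuous_snd ν inferInstance (fun n => (hpS n).2)
  refine ⟨π₀, ⟨hfst, hsnd⟩, ?_⟩
  intro π hf hs
  have hcost₀ : ∫ z, c z ∂π₀ = I := by
    have : ∫ z, c z ∂π₀ = ∫ z, c' z ∂π₀ := rfl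
    rw [this, hint c', hcostL]
  rw [hcost₀]
  exact csInf_le hTbdd ⟨π, ⟨hf, hs⟩, rfl⟩
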